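/- Every almost inner derivation of the 3-dimensional Heisenberg Lie algebra n₃(K) (with basis e₁,e₂,e₃ and only nonzero bracket [e₁,e₂]=e₃) is inner. -/

import Mathlib

/-- Every almost inner derivation of the 3-dimensional Heisenberg Lie algebra
`n₃(K)` (basis `e₁, e₂, e₃` with `⁅e₁,e₂⁆ = e₃` the only nonzero bracket)
is inner. -/
theorem stmt4 {K L : Type*} [Field K] [LieRing L] [LieAlgebra K L]
    (e : Module.Basis (Fin 3) K L)
    (h12 : ⁅e 0, e 1⁆ = e 2) (h13 : ⁅e 0, e 2⁆ = 0) (h23 : ⁅e 1, e 2⁆ = 0)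
    (D : LieDerivation K L L) (hD : ∀ x : L, ∃ y : L, D x = ⁅y, x⁆) :
    ∃ y : L, ∀ x : L, D x = ⁅y, x⁆ := by
  have h10 : ⁅e 1, e 0⁆ = -e 2 := by rw [← lie_skew, h12]
  have h20 : ⁅e 2, e 0⁆ = 0 := by rw [← lie_skew, h13, neg_zero]
  have h21 : ⁅e 2, e 1⁆ = 0 := by rw [← lie_skew, h23, neg_zero]
  have repr3 : ∀ z : L, z = e.repr z 0 • e 0 + e.repr z 1 • e 1 + e.repr z 2 • e 2 := by
    intro z
    conv_lhs => rw [← e.sum_repr z]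
    rw [Fin.sum_univ_three]
  have hb0 : ∀ z : L, ⁅z, e 0⁆ = (-(e.repr z 1)) • e 2 := by
    intro z
    conv_lhs => rw [repr3 z]
    simp [add_lie, smul_lie, h10, h20]
  have hb1 : ∀ z : L, ⁅z, e 1⁆ = (e.repr z 0) • e 2 := by
    intro z
    conv_lhs => rw [repr3 z]
    simp [add_lie, smul_lie, h12, h21]
  obtain ⟨y0, hy0⟩ := hD (e 0)
  obtain ⟨y1, hy1⟩ := hD (e 1)
  set α := -(e.repr y0 1) with hα
  set β := e.repr y1 0 with hβ
  have hD0 : D (e 0) = α • e 2 := by rw [hy0, hb0]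
  have hD1 : D (e 1) = β • e 2 := by rw [hy1, hb1]
  have hD2 : D (e 2) = 0 := by
    have h := D.apply_lie_eq_add (e 0) (e 1)
    rw [h12] at h
    rw [h, hD0, hD1, lie_smul, smul_lie, h13, h21]
    simp
  refine ⟨β • e 0 - α • e 1, fun x => ?_⟩
  have k0 : ⁅β • e 0 - α • e 1, e 0⁆ = α • e 2 := by
    simp [sub_lie, smul_lie, h10]
  have k1 : ⁅β • e 0 - α • e 1, e 1⁆ = β • e 2 := by
    simp [sub_lie, smul_lie, h12]
  have k2 : ⁅β • e 0 - α • e 1, e 2⁆ = 0 := by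
    simp [sub_lie, smul_lie, h13, h23]
  conv_lhs => rw [repr3 x]
  conv_rhs => rw [repr3 x]
  simp only [map_add, map_smul, lie_add, lie_smul, hD0, hD1, hD2, k0, k1, k2]
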